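/- Let ℓ(t) = exp(−|t|), g_σ(μ) = E_{z∼N(μ,σ²)}[ℓ(z)], q_σ(μ) = ∂g_σ(μ)/∂σ, and define r(σ) = σ² + σ·√(2·log(4√2/(√π σ))) if 0 < σ ≤ 4√2/√π, and r(σ) = 2σ² if σ > 4√2/√π. Then for all μ with |μ| ≥ r(σ), we have q_σ(μ) ≥ (1/4)·σ·exp(−|μ|) > 0. -/

import Mathlib

open MeasureTheory ProbabilityTheory Real

/-- `g σ μ = E_{z ∼ N(μ, σ²)}[exp(−|z|)]`. -/
noncomputable def gConv (σ μ : ℝ) : ℝ :=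
  ∫ z, Real.exp (-|z|) ∂(gaussianReal μ (σ ^ 2).toNNReal)

/-- The threshold `r(σ)`. -/
noncomputable def rThresh (σ : ℝ) : ℝ :=
  if σ ≤ 4 * Real.sqrt 2 / Real.sqrt π then
    σ ^ 2 + σ * Real.sqrt (2 * Real.log (4 * Real.sqrt 2 / (Real.sqrt π * σ)))
  else 2 * σ ^ 2

open Set

noncomputable def Ephi (t : ℝ) : ℝ := ∫ x in Set.Ioi t, Real.exp (-x^2/2)

lemma integrable_phi : Integrable (fun x : ℝ => Real.exp (-x^2/2)) := by
  have h := integrable_exp_neg_mul_sq (show (0:ℝ) < 1/2 by norm_num)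
  have e : ∀ x:ℝ, -x^2/2 = -(1/2)*x^2 := fun x => by ring
  simp only [e]
  simpa using h

lemma continuous_phi : Continuous (fun x : ℝ => Real.exp (-x^2/2)) := by continuity

lemma Ephi_nonneg (t : ℝ) : 0 ≤ Ephi t :=
  setIntegral_nonneg measurableSet_Ioi (fun x _ => (Real.exp_nonneg _))

lemma Ephi_zero : Ephi 0 = Real.sqrt (2*π) / 2 := by
  have h := integral_gaussian_Ioi (1/2)
  have e : ∀ x:ℝ, -(1/2)*x^2 = -x^2/2 := fun x => by ring
  rw [Ephi]
  simp only [e] at h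
  rw [h]
  norm_num
  ring

lemma Ephi_ge_half (t : ℝ) (ht : t ≤ 0) : Real.sqrt (2*π) / 2 ≤ Ephi t := by
  rw [← Ephi_zero]
  exact setIntegral_mono_set integrable_phi.integrableOn
    (Filter.Eventually.of_forall fun x => Real.exp_nonneg _)
    ((Set.Ioi_subset_Ioi ht).eventuallyLE)

lemma Ephi_eq (u : ℝ) : Ephi u = Ephi 0 - ∫ x in (0:ℝ)..u, Real.exp (-x^2/2) := by
  have h1 : ∀ w:ℝ, (∫ x in Iic w, Real.exp (-x^2/2)) + Ephi w = ∫ x, Real.exp (-x^2/2) :=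
    fun w => intervalIntegral.integral_Iic_add_Ioi integrable_phi.integrableOn
      integrable_phi.integrableOn
  have h2 := intervalIntegral.integral_Iic_sub_Iic (integrable_phi.integrableOn (s := Iic 0))
    (integrable_phi.integrableOn (s := Iic u))
  have := h1 0; have := h1 u
  linarith [h2]

lemma hasDerivAt_Ephi (t : ℝ) : HasDerivAt Ephi (-Real.exp (-t^2/2)) t := by
  have hF : HasDerivAt (fun u => ∫ x in (0:ℝ)..u, Real.exp (-x^2/2)) (Real.exp (-t^2/2)) t :=
    intervalIntegral.integral_hasDerivAt_right (continuous_phi.intervalIntegrable _ _)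
      (continuous_phi.stronglyMeasurableAtFilter _ _) continuous_phi.continuousAt
  have h := (hasDerivAt_const t (Ephi 0)).sub hF
  simp only [zero_sub] at h
  exact h.congr_of_eventuallyEq (Filter.Eventually.of_forall fun u => Ephi_eq u)

lemma integral_Ioi_comp_add (g : ℝ → ℝ) (u d : ℝ) :
    ∫ x in Ioi u, g (x + d) = ∫ x in Ioi (u + d), g x := by
  rw [← integral_indicator measurableSet_Ioi, ← integral_indicator measurableSet_Ioi]
  have : ∀ x : ℝ, (Ioi u).indicator (fun x => g (x + d)) x = (Ioi (u+d)).indicator g (x + d) := by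
    intro x
    by_cases hx : x ∈ Ioi u
    · rw [Set.indicator_of_mem hx, Set.indicator_of_mem (by simpa using add_lt_add_right hx d)]
    · rw [Set.indicator_of_notMem hx, Set.indicator_of_notMem (by simp at hx ⊢; linarith)]
  simp_rw [this]
  exact integral_add_right_eq_self ((Ioi (u+d)).indicator g) d

lemma half_integral (s m : ℝ) (hs : 0 < s) :
    ∫ z in Ioi (0:ℝ), Real.exp (-z) * gaussianPDFReal m ((s^2).toNNReal) z
      = Real.exp (s^2/2 - m) / Real.sqrt (2*π) * Ephi (s - m/s) := by
  have hv : ((s^2).toNNReal : ℝ) = s^2 := Real.coe_toNNReal _ (sq_nonneg s)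
  have hs2 : (0:ℝ) < s^2 := by positivity
  simp only [gaussianPDFReal, hv]
  have key : ∀ z : ℝ, Real.exp (-z) * ((Real.sqrt (2*π*s^2))⁻¹ * Real.exp (-(z - m)^2/(2*s^2)))
      = (Real.sqrt (2*π*s^2))⁻¹ * Real.exp (s^2/2 - m) *
        Real.exp (-(z + -(m - s^2))^2/(2*s^2)) := by
    intro z
    have h2 : Real.exp (-z) * Real.exp (-(z - m)^2/(2*s^2))
        = Real.exp (s^2/2 - m) * Real.exp (-(z + -(m - s^2))^2/(2*s^2)) := by
      rw [← Real.exp_add, ← Real.exp_add]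
      congr 1
      field_simp
      ring
    calc Real.exp (-z) * ((Real.sqrt (2*π*s^2))⁻¹ * Real.exp (-(z - m)^2/(2*s^2)))
        = (Real.sqrt (2*π*s^2))⁻¹ * (Real.exp (-z) * Real.exp (-(z - m)^2/(2*s^2))) := by ring
      _ = (Real.sqrt (2*π*s^2))⁻¹ *
          (Real.exp (s^2/2 - m) * Real.exp (-(z + -(m - s^2))^2/(2*s^2))) := by rw [h2]
      _ = _ := by ring
  simp_rw [key, integral_const_mul]
  rw [integral_Ioi_comp_add (fun y => Real.exp (-y^2/(2*s^2))) 0 (-(m - s^2))]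
  have scale := integral_comp_mul_left_Ioi (fun y => Real.exp (-y^2/(2*s^2)))
    ((0 + -(m-s^2))/s) hs
  have hinner : ∀ x : ℝ, Real.exp (-(s*x)^2/(2*s^2)) = Real.exp (-x^2/2) := by
    intro x; congr 1; field_simp
  simp only [hinner] at scale
  have harg : s * ((0 + -(m - s^2))/s) = 0 + -(m - s^2) := by field_simp
  rw [harg] at scale
  have hB : (∫ x in Ioi (0 + -(m - s^2)), Real.exp (-x^2/(2*s^2)))
      = s * ∫ x in Ioi ((0 + -(m - s^2))/s), Real.exp (-x^2/2) := by
    rw [scale, smul_eq_mul]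
    field_simp
  rw [hB]
  have harg2 : (0 + -(m - s^2))/s = s - m/s := by field_simp; ring
  rw [harg2]
  have hsqrt : Real.sqrt (2*π*s^2) = Real.sqrt (2*π) * s := by
    rw [Real.sqrt_mul (by positivity), Real.sqrt_sq hs.le]
  rw [Ephi, hsqrt]
  field_simp

lemma gConv_eq (s μ : ℝ) (hs : 0 < s) :
    gConv s μ = (Real.exp (s^2/2 - μ) * Ephi (s - μ/s)
      + Real.exp (s^2/2 + μ) * Ephi (s + μ/s)) / Real.sqrt (2*π) := by
  set v : NNReal := (s^2).toNNReal with hv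
  have hv0 : v ≠ 0 := by
    simp [hv, Real.toNNReal_eq_zero]
    positivity
  have h1 : gConv s μ = ∫ z, Real.exp (-|z|) * gaussianPDFReal μ v z := by
    rw [gConv, gaussianReal_of_var_ne_zero _ hv0]
    have : gaussianPDF μ v = fun x => ((gaussianPDFReal μ v x).toNNReal : ENNReal) := rfl
    rw [this, integral_withDensity_eq_integral_smul
      ((measurable_gaussianPDFReal μ v).real_toNNReal) (fun z => Real.exp (-|z|))]
    congr 1
    ext z
    rw [NNReal.smul_def, smul_eq_mul, Real.coe_toNNReal _ (gaussianPDFReal_nonneg μ v z), mul_comm]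
  have hInt : Integrable (fun z => Real.exp (-|z|) * gaussianPDFReal μ v z) := by
    refine (integrable_gaussianPDFReal μ v).mono ?_ ?_
    · exact (((measurable_abs.neg.exp).mul (measurable_gaussianPDFReal μ v))).aestronglyMeasurable
    · filter_upwards with z
      rw [Real.norm_eq_abs, Real.norm_eq_abs, abs_mul,
        abs_of_nonneg (Real.exp_nonneg _), abs_of_nonneg (gaussianPDFReal_nonneg μ v z)]
      nth_rewrite 2 [← one_mul (gaussianPDFReal μ v z)]
      exact mul_le_mul_of_nonneg_right (Real.exp_le_one_iff.mpr (by simp [abs_nonneg]))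
        (gaussianPDFReal_nonneg μ v z)
  rw [h1, ← intervalIntegral.integral_Iic_add_Ioi hInt.integrableOn hInt.integrableOn]
  have hIoi : ∫ z in Ioi (0:ℝ), Real.exp (-|z|) * gaussianPDFReal μ v z
      = Real.exp (s^2/2 - μ) / Real.sqrt (2*π) * Ephi (s - μ/s) := by
    rw [← half_integral s μ hs]
    refine setIntegral_congr_fun measurableSet_Ioi (fun z hz => ?_)
    rw [abs_of_pos hz]
  have hIic : ∫ z in Iic (0:ℝ), Real.exp (-|z|) * gaussianPDFReal μ v z
      = Real.exp (s^2/2 + μ) / Real.sqrt (2*π) * Ephi (s + μ/s) := by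
    have hneg : ∫ z in Ioi (0:ℝ), (fun x => Real.exp (-|x|) * gaussianPDFReal μ v x) (-z)
        = ∫ z in Iic (-(0:ℝ)), Real.exp (-|z|) * gaussianPDFReal μ v z :=
      integral_comp_neg_Ioi 0 (fun x => Real.exp (-|x|) * gaussianPDFReal μ v x)
    rw [neg_zero] at hneg
    rw [← hneg]
    have hsym : ∀ z : ℝ, z ∈ Ioi (0:ℝ) →
        Real.exp (-|(-z)|) * gaussianPDFReal μ v (-z)
          = Real.exp (-z) * gaussianPDFReal (-μ) v z := by
      intro z hz
      rw [abs_neg, abs_of_pos hz]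
      congr 1
      simp only [gaussianPDFReal]
      congr 2
      ring
    rw [setIntegral_congr_fun measurableSet_Ioi hsym, half_integral s (-μ) hs]
    rw [show s - -μ/s = s + μ/s by ring, show s^2/2 - -μ = s^2/2 + μ by ring]
  rw [hIoi, hIic]
  ring

set_option maxHeartbeats 2000000 in
/-- For `|μ| ≥ r(σ)`, the derivative `q_σ(μ) = ∂g_σ(μ)/∂σ` satisfies
`q_σ(μ) ≥ (1/4)·σ·exp(−|μ|) > 0`. -/
theorem deriv_gaussian_smoothed_loss_positive (σ μ q : ℝ) (hσ : 0 < σ)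
    (hμ : rThresh σ ≤ |μ|)
    (hq : HasDerivAt (fun s => gConv s μ) q σ) :
    (1 / 4) * σ * Real.exp (-|μ|) ≤ q ∧ 0 < (1 / 4) * σ * Real.exp (-|μ|) := by
  have hπ : (0:ℝ) < π := Real.pi_pos
  have hsq : (0:ℝ) < Real.sqrt (2*π) := Real.sqrt_pos.mpr (by positivity)
  refine ⟨?_, by positivity⟩
  have hσ0 : σ ≠ 0 := hσ.ne'
  set m := |μ| with hm
  have hm2eq : m^2 = μ^2 := sq_abs μ
  -- derivative of the closed form
  have hpow1 : HasDerivAt (fun s:ℝ => s^2/2 - μ) σ σ := by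
    have h := ((hasDerivAt_pow 2 σ).div_const 2).sub_const μ
    norm_num at h
    exact h.sub_const μ
  have hpow2 : HasDerivAt (fun s:ℝ => s^2/2 + μ) σ σ := by
    have h := ((hasDerivAt_pow 2 σ).div_const 2).add_const μ
    norm_num at h
    exact h.add_const μ
  have hdiv : HasDerivAt (fun s:ℝ => μ/s) (-(μ/σ^2)) σ := by
    have h := (hasDerivAt_const σ μ).div (hasDerivAt_id σ) hσ0
    simp only [id_eq] at h
    have e : (0 * σ - μ * 1) / σ ^ 2 = -(μ/σ^2) := by ring
    rw [e] at h
    exact h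
  have hA : HasDerivAt (fun s:ℝ => s - μ/s) (1 + μ/σ^2) σ := by
    have h := (hasDerivAt_id σ).sub hdiv
    have e : (1:ℝ) - -(μ/σ^2) = 1 + μ/σ^2 := by ring
    rw [e] at h
    exact h
  have hB : HasDerivAt (fun s:ℝ => s + μ/s) (1 - μ/σ^2) σ := by
    have h := (hasDerivAt_id σ).add hdiv
    have e : (1:ℝ) + -(μ/σ^2) = 1 - μ/σ^2 := by ring
    rw [e] at h
    exact h
  have hEa : HasDerivAt (fun s => Ephi (s - μ/s))
      (-Real.exp (-(σ - μ/σ)^2/2) * (1 + μ/σ^2)) σ :=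
    by have := (hasDerivAt_Ephi (σ - μ/σ)).comp σ hA; exact this
  have hEb : HasDerivAt (fun s => Ephi (s + μ/s))
      (-Real.exp (-(σ + μ/σ)^2/2) * (1 - μ/σ^2)) σ :=
    by have := (hasDerivAt_Ephi (σ + μ/σ)).comp σ hB; exact this
  have hP1 : HasDerivAt (fun s => Real.exp (s^2/2 - μ) * Ephi (s - μ/s))
      (Real.exp (σ^2/2 - μ) * σ * Ephi (σ - μ/σ)
        + Real.exp (σ^2/2 - μ) * (-Real.exp (-(σ - μ/σ)^2/2) * (1 + μ/σ^2))) σ :=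
    (hpow1.exp.mul hEa)
  have hP2 : HasDerivAt (fun s => Real.exp (s^2/2 + μ) * Ephi (s + μ/s))
      (Real.exp (σ^2/2 + μ) * σ * Ephi (σ + μ/σ)
        + Real.exp (σ^2/2 + μ) * (-Real.exp (-(σ + μ/σ)^2/2) * (1 - μ/σ^2))) σ :=
    (hpow2.exp.mul hEb)
  have hG := (hP1.add hP2).div_const (Real.sqrt (2*π))
  have heq : (fun s => gConv s μ) =ᶠ[nhds σ] (fun s =>
      (Real.exp (s^2/2 - μ) * Ephi (s - μ/s)
        + Real.exp (s^2/2 + μ) * Ephi (s + μ/s)) / Real.sqrt (2*π)) := by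
    filter_upwards [eventually_gt_nhds hσ] with s hs using gConv_eq s μ hs
  have hq' := hG.congr_of_eventuallyEq heq
  have hqD := hq.unique hq'
  -- simplify the derivative value
  have id1 : Real.exp (σ^2/2 - μ) * Real.exp (-(σ - μ/σ)^2/2) = Real.exp (-(m^2/(2*σ^2))) := by
    rw [← Real.exp_add]
    congr 1
    rw [hm2eq]
    field_simp
    ring
  have id2 : Real.exp (σ^2/2 + μ) * Real.exp (-(σ + μ/σ)^2/2) = Real.exp (-(m^2/(2*σ^2))) := by
    rw [← Real.exp_add]
    congr 1
    rw [hm2eq]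
    field_simp
    ring
  have hq2 : q = (σ * (Real.exp (σ^2/2 - μ) * Ephi (σ - μ/σ)
      + Real.exp (σ^2/2 + μ) * Ephi (σ + μ/σ))
      - 2 * Real.exp (-(m^2/(2*σ^2)))) / Real.sqrt (2*π) := by
    rw [hqD]
    congr 1
    linear_combination (-(1 + μ/σ^2)) * id1 + (-(1 - μ/σ^2)) * id2
  -- consequences of the threshold
  have hπs : (0:ℝ) < Real.sqrt π := Real.sqrt_pos.mpr hπ
  have hCpos : (0:ℝ) < 4 * Real.sqrt 2 / (Real.sqrt π * σ) := by positivity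
  have hm1 : σ^2 ≤ m := by
    rw [rThresh] at hμ
    by_cases hc : σ ≤ 4 * Real.sqrt 2 / Real.sqrt π
    · rw [if_pos hc] at hμ
      have : 0 ≤ σ * Real.sqrt (2 * Real.log (4 * Real.sqrt 2 / (Real.sqrt π * σ))) := by
        positivity
      linarith
    · rw [if_neg hc] at hμ
      nlinarith [sq_nonneg σ]
  have hm2 : Real.log (4 * Real.sqrt 2 / (Real.sqrt π * σ)) ≤ (m - σ^2)^2/(2*σ^2) := by
    rw [rThresh] at hμ
    by_cases hc : σ ≤ 4 * Real.sqrt 2 / Real.sqrt π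
    · rw [if_pos hc] at hμ
      set L := Real.log (4 * Real.sqrt 2 / (Real.sqrt π * σ)) with hL
      have hL0 : 0 ≤ L := by
        apply Real.log_nonneg
        rw [le_div_iff₀ (by positivity)]
        have := (le_div_iff₀ hπs).mp hc
        nlinarith
      have h1 : σ * Real.sqrt (2*L) ≤ m - σ^2 := by linarith
      have h2 : 0 ≤ σ * Real.sqrt (2*L) := by positivity
      have h3 : (σ * Real.sqrt (2*L))^2 ≤ (m - σ^2)^2 := by nlinarith
      have h4 : (σ * Real.sqrt (2*L))^2 = σ^2 * (2*L) := by
        rw [mul_pow, Real.sq_sqrt (by linarith)]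
      rw [le_div_iff₀ (by positivity)]
      nlinarith
    · rw [if_neg hc] at hμ
      push_neg at hc
      have harg : 4 * Real.sqrt 2 / (Real.sqrt π * σ) < 1 := by
        rw [div_lt_one (by positivity)]
        have := (div_lt_iff₀ hπs).mp hc
        nlinarith
      have hlogneg : Real.log (4 * Real.sqrt 2 / (Real.sqrt π * σ)) < 0 :=
        Real.log_neg hCpos harg
      have : (0:ℝ) ≤ (m - σ^2)^2/(2*σ^2) := by positivity
      linarith
  -- the dominant term
  have hterm : Real.exp (σ^2/2 - m) * Ephi (σ - m/σ)
      ≤ Real.exp (σ^2/2 - μ) * Ephi (σ - μ/σ) + Real.exp (σ^2/2 + μ) * Ephi (σ + μ/σ) := by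
    rcases abs_cases μ with ⟨h1, _⟩ | ⟨h1, _⟩
    · rw [hm, h1]
      exact le_add_of_nonneg_right (mul_nonneg (Real.exp_nonneg _) (Ephi_nonneg _))
    · rw [hm, h1, show σ^2/2 - -μ = σ^2/2 + μ by ring, show σ - -μ/σ = σ + μ/σ by ring]
      exact le_add_of_nonneg_left (mul_nonneg (Real.exp_nonneg _) (Ephi_nonneg _))
  have hE : Real.sqrt (2*π)/2 ≤ Ephi (σ - m/σ) := by
    apply Ephi_ge_half
    rw [sub_nonpos, le_div_iff₀ hσ]
    rw [← pow_two]
    exact hm1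
  -- key exponential inequality
  have hX : Real.exp (σ^2/2 - m)
      = Real.exp ((m - σ^2)^2/(2*σ^2)) * Real.exp (-(m^2/(2*σ^2))) := by
    rw [← Real.exp_add]
    congr 1
    field_simp
    ring
  have h8 : 8/(σ * Real.sqrt (2*π)) ≤ Real.exp ((m - σ^2)^2/(2*σ^2)) := by
    have hc : 8/(σ * Real.sqrt (2*π)) = 4 * Real.sqrt 2 / (Real.sqrt π * σ) := by
      rw [Real.sqrt_mul (by norm_num : (0:ℝ) ≤ 2)]
      have h2s : Real.sqrt 2 * Real.sqrt 2 = 2 := Real.mul_self_sqrt (by norm_num)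
      have h2p : (0:ℝ) < Real.sqrt 2 := Real.sqrt_pos.mpr (by norm_num)
      rw [div_eq_div_iff (by positivity) (by positivity)]
      linear_combination (-(4*σ*Real.sqrt π)) * h2s
    rw [hc, ← Real.exp_log hCpos]
    exact Real.exp_le_exp.mpr hm2
  have hkey : 2 * Real.exp (-(m^2/(2*σ^2)))
      ≤ σ * Real.sqrt (2*π)/4 * Real.exp (σ^2/2 - m) := by
    rw [hX]
    have h2' : (2:ℝ) ≤ σ * Real.sqrt (2*π)/4 * Real.exp ((m - σ^2)^2/(2*σ^2)) := by
      have hS : (0:ℝ) < σ * Real.sqrt (2*π) := by positivity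
      calc (2:ℝ) = σ * Real.sqrt (2*π)/4 * (8/(σ * Real.sqrt (2*π))) := by
            field_simp
            ring
          _ ≤ _ := mul_le_mul_of_nonneg_left h8 (by positivity)
    calc 2 * Real.exp (-(m^2/(2*σ^2)))
        ≤ (σ * Real.sqrt (2*π)/4 * Real.exp ((m - σ^2)^2/(2*σ^2)))
          * Real.exp (-(m^2/(2*σ^2))) :=
          mul_le_mul_of_nonneg_right h2' (Real.exp_nonneg _)
      _ = σ * Real.sqrt (2*π)/4 * (Real.exp ((m - σ^2)^2/(2*σ^2))
          * Real.exp (-(m^2/(2*σ^2)))) := by ring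
  -- put everything together
  have hmono : Real.exp (-m) ≤ Real.exp (σ^2/2 - m) := by
    apply Real.exp_le_exp.mpr
    nlinarith [sq_nonneg σ]
  rw [hq2, le_div_iff₀ hsq]
  have s1 : σ * (Real.exp (σ^2/2 - m) * Ephi (σ - m/σ))
      ≤ σ * (Real.exp (σ^2/2 - μ) * Ephi (σ - μ/σ)
        + Real.exp (σ^2/2 + μ) * Ephi (σ + μ/σ)) :=
    mul_le_mul_of_nonneg_left hterm hσ.le
  have s2 : σ * (Real.exp (σ^2/2 - m) * (Real.sqrt (2*π)/2))
      ≤ σ * (Real.exp (σ^2/2 - m) * Ephi (σ - m/σ)) :=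
    mul_le_mul_of_nonneg_left (mul_le_mul_of_nonneg_left hE (Real.exp_nonneg _)) hσ.le
  have s3 : (1/4) * σ * Real.exp (-m) * Real.sqrt (2*π)
      ≤ (1/4) * σ * Real.exp (σ^2/2 - m) * Real.sqrt (2*π) := by
    have h := mul_nonneg (mul_nonneg (by positivity : (0:ℝ) ≤ (1/4)*σ)
      (sub_nonneg.mpr hmono)) (Real.sqrt_nonneg (2*π))
    nlinarith [h]
  linarith
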